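/- Let p₁, p₂ ∈ (0,1) and q : Z_N → (0,1] with p₁q_i, p₂q_i ∈ (0,1) for all i, and let X₁, X₂ be independent Z_N-indexed families of independent random variables with X₁(i) ~ Geom(p₁q_i) and X₂(i) ~ Geom(p₂q_i) (ℙ(X=n) = (pq)^n(1−pq) for n ≥ 0). Then the pair (X₁, X₂) has the same joint distribution as (T̃(X₁,X₂), D̃(X₁,X₂)), where T̃, D̃ are the zero-temperature periodic Pitman maps. -/

import Mathlib

open Finset Real

variable {N : ℕ}

/-- Cyclic sum `Y_{[i,j]}` (closed-closed), going from `i` around to `j`. -/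
noncomputable def cycCC [NeZero N] (Y : ZMod N → ℝ) (i j : ZMod N) : ℝ :=
  ∑ ℓ ∈ Finset.range ((j - i).val + 1), Y (i + ℓ)

/-- Cyclic sum `Y_{(i,j]}` (open-closed), with `Y_{(i,i]} = 0`. -/
noncomputable def cycOC [NeZero N] (Y : ZMod N → ℝ) (i j : ZMod N) : ℝ :=
  ∑ ℓ ∈ Finset.range ((j - i).val), Y (i + 1 + ℓ)

/-- `Y_ℓ = X₂(ℓ+1) − X₁(ℓ)`. -/
noncomputable def Yv [NeZero N] (X₁ X₂ : ZMod N → ℝ) : ZMod N → ℝ :=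
  fun ℓ => X₂ (ℓ + 1) - X₁ ℓ

/-- Positive-temperature periodic Pitman map `T`. -/
noncomputable def Tmap [NeZero N] (X₁ X₂ : ZMod N → ℝ) (i : ZMod N) : ℝ :=
  X₁ (i - 1) + Real.log ((∑ j : ZMod N, Real.exp (cycCC (Yv X₁ X₂) (i - 1) j)) /
    (∑ j : ZMod N, Real.exp (cycCC (Yv X₁ X₂) i j)))

/-- Positive-temperature periodic Pitman map `D`. -/
noncomputable def Dmap [NeZero N] (X₁ X₂ : ZMod N → ℝ) (i : ZMod N) : ℝ :=
  X₂ (i + 1) + Real.log ((∑ j : ZMod N, Real.exp (cycOC (Yv X₁ X₂) i j)) /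
    (∑ j : ZMod N, Real.exp (cycOC (Yv X₁ X₂) (i - 1) j)))

/-- Zero-temperature periodic Pitman map `T̃`. -/
noncomputable def Tz [NeZero N] (X₁ X₂ : ZMod N → ℝ) (i : ZMod N) : ℝ :=
  X₁ (i - 1) + Finset.univ.sup' Finset.univ_nonempty (fun j => cycCC (Yv X₁ X₂) (i - 1) j)
    - Finset.univ.sup' Finset.univ_nonempty (fun j => cycCC (Yv X₁ X₂) i j)

/-- Zero-temperature periodic Pitman map `D̃`. -/
noncomputable def Dz [NeZero N] (X₁ X₂ : ZMod N → ℝ) (i : ZMod N) : ℝ :=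
  X₂ (i + 1) + Finset.univ.sup' Finset.univ_nonempty (fun j => cycOC (Yv X₁ X₂) i j)
    - Finset.univ.sup' Finset.univ_nonempty (fun j => cycOC (Yv X₁ X₂) (i - 1) j)


section A
variable [NeZero N]

lemma val_pred {x : ZMod N} (hx : x ≠ 0) : (x - 1).val + 1 = x.val := by
  have h1 : x.val ≠ 0 := fun h => hx ((ZMod.val_eq_zero x).1 h)
  have h2 : x.val < N := ZMod.val_lt x
  have hx1 : (1:ℕ) ≤ x.val := Nat.one_le_iff_ne_zero.2 h1
  have : x - 1 = ((x.val - 1 : ℕ) : ZMod N) := by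
    rw [Nat.cast_sub hx1, ZMod.natCast_zmod_val]
    push_cast
    ring
  rw [this, ZMod.val_natCast, Nat.mod_eq_of_lt (by omega)]
  omega

lemma cycCC_eq_add (Y : ZMod N → ℝ) (i j : ZMod N) :
    cycCC Y i j = Y i + cycOC Y i j := by
  rw [cycCC, cycOC, Finset.sum_range_succ']
  simp only [Nat.cast_add, Nat.cast_one, Nat.cast_zero, add_zero]
  rw [add_comm]
  congr 1
  apply Finset.sum_congr rfl
  intro k _
  ring_nf

lemma cycOC_step (Y : ZMod N → ℝ) {i j : ZMod N} (h : j ≠ i) :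
    cycOC Y i j = Y (i + 1) + cycOC Y (i + 1) j := by
  have h0 : j - i ≠ 0 := sub_ne_zero.2 h
  have hv : (j - i - 1).val + 1 = (j - i).val := val_pred h0
  rw [cycOC, cycOC]
  have : j - (i + 1) = j - i - 1 := by ring
  rw [this, ← hv, Finset.sum_range_succ']
  simp only [Nat.cast_add, Nat.cast_one, Nat.cast_zero, add_zero]
  rw [add_comm]
  congr 1
  apply Finset.sum_congr rfl
  intro k _
  ring_nf

/-- `cycOC Y (i-1) j = cycCC Y i j` for `j ≠ i - 1`. -/
lemma cycOC_pred (Y : ZMod N → ℝ) {i j : ZMod N} (h : j ≠ i - 1) :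
    cycOC Y (i - 1) j = cycCC Y i j := by
  have := cycOC_step Y (i := i - 1) (j := j) h
  rw [this, sub_add_cancel, ← cycCC_eq_add]

lemma val_neg_one' : (-1 : ZMod N).val = N - 1 := by
  have hN : 0 < N := Nat.pos_of_ne_zero (NeZero.ne N)
  have : (-1 : ZMod N) = ((N - 1 : ℕ) : ZMod N) := by
    have : ((N : ℕ) : ZMod N) = 0 := ZMod.natCast_self N
    push_cast [Nat.cast_sub hN]
    rw [this]; ring
  rw [this, ZMod.val_natCast, Nat.mod_eq_of_lt (by omega)]

/-- full cycle -/
lemma cycCC_full (Y : ZMod N → ℝ) (i : ZMod N) :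
    cycCC Y i (i - 1) = ∑ l : ZMod N, Y l := by
  have hN : 0 < N := Nat.pos_of_ne_zero (NeZero.ne N)
  have hv : (i - 1 - i).val + 1 = N := by
    have : i - 1 - i = (-1 : ZMod N) := by ring
    rw [this, val_neg_one']; omega
  rw [cycCC, hv]
  refine Finset.sum_nbij' (fun ℓ => i + (ℓ : ZMod N)) (fun l => (l - i).val)
    (fun a _ => Finset.mem_univ _) (fun a _ => Finset.mem_range.2 (ZMod.val_lt _))
    ?_ ?_ ?_
  · intro a ha
    rw [Finset.mem_range] at ha
    simp only [add_sub_cancel_left, ZMod.val_natCast, Nat.mod_eq_of_lt ha]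
  · intro a _
    simp [ZMod.natCast_zmod_val]
  · intros; rfl
end A

section B
variable [NeZero N]

lemma my_sup'_const_add {α : Type*} [Fintype α] [Nonempty α] (c : ℝ) (f : α → ℝ) :
    Finset.univ.sup' Finset.univ_nonempty (fun j => c + f j) =
      c + Finset.univ.sup' Finset.univ_nonempty f := by
  apply le_antisymm
  · exact Finset.sup'_le _ _ fun b _ => add_le_add_right (Finset.le_sup' f (Finset.mem_univ b)) c
  · obtain ⟨j₀, _, hj₀⟩ := Finset.exists_mem_eq_sup' Finset.univ_nonempty f
    rw [hj₀]
    exact Finset.le_sup' (fun j => c + f j) (Finset.mem_univ j₀)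

lemma my_sup'_le_sup'_add {α : Type*} [Fintype α] [Nonempty α] (f g : α → ℝ) (c : ℝ)
    (h : ∀ j, f j ≤ g j + c) :
    Finset.univ.sup' Finset.univ_nonempty f ≤ Finset.univ.sup' Finset.univ_nonempty g + c := by
  apply Finset.sup'_le
  intro b _
  exact (h b).trans (add_le_add_left (Finset.le_sup' g (Finset.mem_univ b)) c)
end B

section C
variable [NeZero N] (Y : ZMod N → ℝ)

noncomputable def Vs (i : ZMod N) : ℝ := ∑ j : ZMod N, Real.exp (cycOC Y i j)

lemma Vs_pos (i : ZMod N) : 0 < Vs Y i :=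
  Finset.sum_pos (fun j _ => Real.exp_pos _) Finset.univ_nonempty

lemma cycCC_self (m : ZMod N) : cycCC Y m m = Y m := by
  rw [cycCC]
  simp

lemma cycOC_self (m : ZMod N) : cycOC Y m m = 0 := by
  rw [cycOC]
  simp

lemma cycOC_to_full (i : ZMod N) : cycOC Y (i + 1) i = (∑ l : ZMod N, Y l) - Y (i + 1) := by
  have h1 := cycCC_full Y (i + 1)
  have h2 : i + 1 - 1 = i := by ring
  rw [h2] at h1
  have h3 := cycCC_eq_add Y (i + 1) i
  linarith

lemma Vs_rec (i : ZMod N) :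
    Vs Y i = (1 - Real.exp (∑ l : ZMod N, Y l)) + Real.exp (Y (i + 1)) * Vs Y (i + 1) := by
  have hsplit : Vs Y i = Real.exp (cycOC Y i i) +
      ∑ j ∈ Finset.univ.erase i, Real.exp (cycOC Y i j) := by
    rw [Vs, ← Finset.add_sum_erase _ _ (Finset.mem_univ i)]
  have hstep : ∀ j ∈ Finset.univ.erase i,
      Real.exp (cycOC Y i j) = Real.exp (Y (i + 1)) * Real.exp (cycOC Y (i + 1) j) := by
    intro j hj
    rw [cycOC_step Y (Finset.ne_of_mem_erase hj), Real.exp_add]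
  rw [hsplit, Finset.sum_congr rfl hstep, ← Finset.mul_sum, cycOC_self]
  have herase : ∑ j ∈ Finset.univ.erase i, Real.exp (cycOC Y (i + 1) j)
      = Vs Y (i + 1) - Real.exp (cycOC Y (i + 1) i) := by
    rw [Vs, ← Finset.add_sum_erase _ _ (Finset.mem_univ i)]
    ring
  rw [herase, cycOC_to_full, mul_sub, ← Real.exp_add, Real.exp_zero]
  ring_nf

lemma cycCC_pred_of_ne {k m : ZMod N} (h : k ≠ m + 1) :
    cycCC Y (k - 1) m = Y (k - 1) + cycCC Y k m := by
  rw [cycCC_eq_add, cycOC_pred Y (i := k) (j := m)]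
  intro hm
  exact h (by rw [hm]; ring)

lemma cycCC_succ_self (m : ZMod N) : cycCC Y (m + 1) m = ∑ l : ZMod N, Y l := by
  have := cycCC_full Y (m + 1)
  have h2 : m + 1 - 1 = m := by ring
  rwa [h2] at this

/-- Positive-temperature key identity, case `Σ ≠ 0`. -/
lemma posKey (hS : (∑ l : ZMod N, Y l) ≠ 0) (m : ZMod N) :
    ∑ k : ZMod N, Real.exp (cycCC Y k m) / (Vs Y (k - 1) * Vs Y (k - 2)) =
      Real.exp (Y m) / Vs Y (m - 1) := by
  set E := Real.exp (∑ l : ZMod N, Y l) with hE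
  have hE1 : 1 - E ≠ 0 := by
    intro h
    have h1 : E = Real.exp 0 := by rw [Real.exp_zero]; linarith
    exact hS (Real.exp_injective h1)
  set u : ZMod N → ℝ := fun k => Real.exp (cycCC Y k m) / Vs Y (k - 1) with hu
  have hterm : ∀ k : ZMod N,
      Real.exp (cycCC Y k m) / (Vs Y (k - 1) * Vs Y (k - 2)) =
        (u k - u (k - 1)) / (1 - E) + (if k = m + 1 then Real.exp (Y m) / Vs Y (m - 1) else 0) := by
    intro k
    have hV2 : Vs Y (k - 2) = (1 - E) + Real.exp (Y (k - 1)) * Vs Y (k - 1) := by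
      have := Vs_rec Y (k - 2)
      have h2 : k - 2 + 1 = k - 1 := by ring
      rwa [h2] at this
    have hV1pos := Vs_pos Y (k - 1)
    have hV2pos := Vs_pos Y (k - 2)
    by_cases hk : k = m + 1
    · subst hk
      have hk1 : m + 1 - 1 = m := by ring
      have hk2 : m + 1 - 2 = m - 1 := by ring
      have ht : cycCC Y (m + 1) m = ∑ l : ZMod N, Y l := cycCC_succ_self Y m
      rw [if_pos rfl, hu]
      rw [hk1, hk2] at hV2
      simp only [hk1, hk2, ht, cycCC_self, ← hE]
      have hm1pos : (0:ℝ) < Vs Y (m - 1) := Vs_pos Y (m - 1)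
      have hmpos : (0:ℝ) < Vs Y m := Vs_pos Y m
      rw [hV2]
      have hne : 1 - E + Real.exp (Y m) * Vs Y m ≠ 0 := by rw [← hV2]; positivity
      field_simp
      have hne' : 1 - E + Vs Y m * Real.exp (Y m) ≠ 0 := by rw [mul_comm]; exact hne
      field_simp
      ring
    · rw [if_neg hk, add_zero, hu]
      have ht : cycCC Y (k - 1) m = Y (k - 1) + cycCC Y k m := cycCC_pred_of_ne Y hk
      simp only [ht]
      have h12 : k - 1 - 1 = k - 2 := by ring
      rw [h12, Real.exp_add, hV2]
      have hne : 1 - E + Real.exp (Y (k - 1)) * Vs Y (k - 1) ≠ 0 := by rw [← hV2]; positivity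
      field_simp
      have hne' : 1 - E + Vs Y (k - 1) * Real.exp (Y (k - 1)) ≠ 0 := by rw [mul_comm]; exact hne
      field_simp
      ring
  rw [Finset.sum_congr rfl (fun k _ => hterm k), Finset.sum_add_distrib]
  have h1 : ∑ k : ZMod N, (u k - u (k - 1)) / (1 - E) = 0 := by
    rw [← Finset.sum_div, Finset.sum_sub_distrib]
    have : ∑ k : ZMod N, u (k - 1) = ∑ k : ZMod N, u k :=
      Fintype.sum_equiv (Equiv.subRight (1 : ZMod N)) _ _ (fun k => rfl)
    rw [this, sub_self, zero_div]
  rw [h1, zero_add, Finset.sum_ite_eq' Finset.univ (m + 1)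
    (fun _ => Real.exp (Y m) / Vs Y (m - 1))]
  simp
end C

section D
variable [NeZero N]

noncomputable def Mz (Y : ZMod N → ℝ) (i : ZMod N) : ℝ :=
  Finset.univ.sup' Finset.univ_nonempty (fun j => cycOC Y i j)
noncomputable def Sz (Y : ZMod N → ℝ) (i : ZMod N) : ℝ :=
  Finset.univ.sup' Finset.univ_nonempty (fun j => cycCC Y i j)
noncomputable def Gz (Y : ZMod N → ℝ) (m : ZMod N) : ℝ :=
  Finset.univ.sup' Finset.univ_nonempty (fun k => cycCC Y k m - Mz Y (k - 1) - Mz Y (k - 2))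

lemma cycCC_smul (c : ℝ) (Y : ZMod N → ℝ) (i j : ZMod N) :
    cycCC (fun l => c * Y l) i j = c * cycCC Y i j := by
  rw [cycCC, cycCC, Finset.mul_sum]

lemma cycOC_smul (c : ℝ) (Y : ZMod N → ℝ) (i j : ZMod N) :
    cycOC (fun l => c * Y l) i j = c * cycOC Y i j := by
  rw [cycOC, cycOC, Finset.mul_sum]

lemma lse_lower (f : ZMod N → ℝ) :
    Finset.univ.sup' Finset.univ_nonempty f ≤ Real.log (∑ j : ZMod N, Real.exp (f j)) := by
  obtain ⟨j₀, _, hj₀⟩ := Finset.exists_mem_eq_sup' Finset.univ_nonempty f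
  rw [hj₀]
  have h1 : Real.exp (f j₀) ≤ ∑ j : ZMod N, Real.exp (f j) :=
    Finset.single_le_sum (fun j _ => (Real.exp_pos (f j)).le) (Finset.mem_univ j₀)
  calc f j₀ = Real.log (Real.exp (f j₀)) := (Real.log_exp _).symm
    _ ≤ _ := Real.log_le_log (Real.exp_pos _) h1

lemma lse_upper (f : ZMod N → ℝ) :
    Real.log (∑ j : ZMod N, Real.exp (f j)) ≤
      Finset.univ.sup' Finset.univ_nonempty f + Real.log N := by
  have hN : 0 < N := Nat.pos_of_ne_zero (NeZero.ne N)
  have h1 : ∑ j : ZMod N, Real.exp (f j) ≤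
      (N : ℝ) * Real.exp (Finset.univ.sup' Finset.univ_nonempty f) := by
    calc ∑ j : ZMod N, Real.exp (f j)
        ≤ ∑ _j : ZMod N, Real.exp (Finset.univ.sup' Finset.univ_nonempty f) :=
          Finset.sum_le_sum (fun j _ =>
            Real.exp_le_exp.2 (Finset.le_sup' f (Finset.mem_univ j)))
      _ = (N : ℝ) * Real.exp (Finset.univ.sup' Finset.univ_nonempty f) := by
          rw [Finset.sum_const, Finset.card_univ, ZMod.card]
          simp [nsmul_eq_mul]
  calc Real.log (∑ j : ZMod N, Real.exp (f j)) ≤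
      Real.log ((N : ℝ) * Real.exp (Finset.univ.sup' Finset.univ_nonempty f)) :=
        Real.log_le_log (Finset.sum_pos (fun j _ => Real.exp_pos _) Finset.univ_nonempty) h1
    _ = _ := by
        rw [Real.log_mul (by positivity) (Real.exp_ne_zero _), Real.log_exp, add_comm]

lemma zero_of_nat_mul_le (d C : ℝ) (h : ∀ n : ℕ, 1 ≤ n → (n : ℝ) * |d| ≤ C) : d = 0 := by
  by_contra hd
  have hd' : 0 < |d| := abs_pos.2 hd
  have hC : 0 ≤ C := le_trans (by simpa using (abs_nonneg d)) (h 1 le_rfl)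
  obtain ⟨n, hn⟩ := exists_nat_gt (C / |d|)
  have hn1 : 1 ≤ n := by
    by_contra h0
    push_neg at h0
    interval_cases n
    · simp at hn
      have := div_nonneg hC hd'.le
      linarith
  have := h n hn1
  rw [div_lt_iff₀ hd'] at hn
  linarith

lemma zero_of_le_eps (d K : ℝ) (h : ∀ ε : ℝ, 0 < ε → |d| ≤ K * ε) : d = 0 := by
  by_contra hd
  have hd' : 0 < |d| := abs_pos.2 hd
  have hK : 0 < K := by
    by_contra hK
    push_neg at hK
    have := h 1 one_pos
    nlinarith
  have := h (|d| / (2 * K)) (by positivity)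
  rw [mul_div_assoc'] at this
  have h2 : K * |d| / (2 * K) = |d| / 2 := by field_simp
  rw [h2] at this
  linarith

lemma key1 (Y : ZMod N → ℝ) (hS : (∑ l : ZMod N, Y l) ≠ 0) (m : ZMod N) :
    Gz Y m = Y m - Mz Y (m - 1) := by
  have hlogN : 0 ≤ Real.log N := by
    have hN : 1 ≤ N := Nat.one_le_iff_ne_zero.2 (NeZero.ne N)
    apply Real.log_nonneg
    exact_mod_cast hN
  have main : ∀ n : ℕ, 1 ≤ n →
      (n : ℝ) * |Y m - Mz Y (m - 1) - Gz Y m| ≤ 3 * Real.log N := by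
    intro n hn
    have hnpos : (0:ℝ) < n := by exact_mod_cast hn
    set Yn : ZMod N → ℝ := fun l => (n : ℝ) * Y l with hYn
    have hSn : (∑ l : ZMod N, Yn l) ≠ 0 := by
      rw [hYn, ← Finset.mul_sum]
      exact mul_ne_zero (ne_of_gt hnpos) hS
    -- bounds on log (Vs Yn i)
    have hV : ∀ i : ZMod N, (n:ℝ) * Mz Y i ≤ Real.log (Vs Yn i) ∧
        Real.log (Vs Yn i) ≤ (n:ℝ) * Mz Y i + Real.log N := by
      intro i
      have hVi : Vs Yn i = ∑ j : ZMod N, Real.exp ((n:ℝ) * cycOC Y i j) := by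
        rw [Vs]
        exact Finset.sum_congr rfl (fun j _ => by rw [hYn, cycOC_smul])
      have hsup : Finset.univ.sup' Finset.univ_nonempty (fun j => (n:ℝ) * cycOC Y i j)
          = (n:ℝ) * Mz Y i := by
        apply le_antisymm
        · apply Finset.sup'_le
          intro j _
          exact mul_le_mul_of_nonneg_left (Finset.le_sup' _ (Finset.mem_univ j)) hnpos.le
        · obtain ⟨j₀, _, hj₀⟩ := Finset.exists_mem_eq_sup' Finset.univ_nonempty
            (fun j => cycOC Y i j)
          rw [Mz, hj₀]
          exact Finset.le_sup' (fun j => (n:ℝ) * cycOC Y i j) (Finset.mem_univ j₀)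
      constructor
      · rw [hVi, ← hsup]; exact lse_lower _
      · rw [hVi, ← hsup]; exact lse_upper _
    -- the logarithmic identity
    have hid := posKey Yn hSn m
    have hLHS : ∑ k : ZMod N, Real.exp (cycCC Yn k m) / (Vs Yn (k - 1) * Vs Yn (k - 2)) =
        ∑ k : ZMod N, Real.exp ((n:ℝ) * cycCC Y k m
          - Real.log (Vs Yn (k - 1)) - Real.log (Vs Yn (k - 2))) := by
      apply Finset.sum_congr rfl
      intro k _
      rw [Real.exp_sub, Real.exp_sub, Real.exp_log (Vs_pos _ _), Real.exp_log (Vs_pos _ _),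
        hYn, cycCC_smul, div_div]
    rw [hLHS] at hid
    have hlog := congrArg Real.log hid
    rw [Real.log_div (Real.exp_ne_zero _) (ne_of_gt (Vs_pos Yn (m - 1))), Real.log_exp] at hlog
    -- bounds on log sum
    set g : ZMod N → ℝ := fun k => (n:ℝ) * cycCC Y k m
      - Real.log (Vs Yn (k - 1)) - Real.log (Vs Yn (k - 2)) with hg
    have hup : Finset.univ.sup' Finset.univ_nonempty g ≤ (n:ℝ) * Gz Y m := by
      apply Finset.sup'_le
      intro k _
      have h1 := (hV (k - 1)).1
      have h2 := (hV (k - 2)).1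
      have h3 : cycCC Y k m - Mz Y (k - 1) - Mz Y (k - 2) ≤ Gz Y m :=
        Finset.le_sup' (fun k => cycCC Y k m - Mz Y (k - 1) - Mz Y (k - 2)) (Finset.mem_univ k)
      have h4 : (n:ℝ) * (cycCC Y k m - Mz Y (k - 1) - Mz Y (k - 2)) ≤ (n:ℝ) * Gz Y m :=
        mul_le_mul_of_nonneg_left h3 hnpos.le
      rw [hg]
      dsimp only
      nlinarith
    have hdown : (n:ℝ) * Gz Y m - 2 * Real.log N ≤ Finset.univ.sup' Finset.univ_nonempty g := by
      obtain ⟨k₀, _, hk₀⟩ := Finset.exists_mem_eq_sup' Finset.univ_nonempty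
        (fun k => cycCC Y k m - Mz Y (k - 1) - Mz Y (k - 2))
      have h1 := (hV (k₀ - 1)).2
      have h2 := (hV (k₀ - 2)).2
      have h3 : g k₀ ≤ Finset.univ.sup' Finset.univ_nonempty g :=
        Finset.le_sup' g (Finset.mem_univ k₀)
      rw [Gz, hk₀]
      rw [hg] at h3
      dsimp only at h3
      nlinarith
    have hl1 := lse_lower g
    have hl2 := lse_upper g
    rw [hlog] at hl1 hl2
    have hm1 := (hV (m - 1)).1
    have hm2 := (hV (m - 1)).2
    simp only [hYn] at hl1 hl2
    have habs : (n:ℝ) * |Y m - Mz Y (m - 1) - Gz Y m|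
        = |(n:ℝ) * (Y m - Mz Y (m - 1) - Gz Y m)| := by
      rw [abs_mul, abs_of_nonneg hnpos.le]
    rw [habs, abs_le]
    constructor
    · nlinarith
    · nlinarith
  have := zero_of_nat_mul_le _ (3 * Real.log N) main
  linarith [abs_nonneg (Y m - Mz Y (m - 1) - Gz Y m), this]
end D

section D2
variable [NeZero N]

lemma abs_cycCC_sub (Y₁ Y₂ : ZMod N → ℝ) (c : ℝ) (hc : ∀ l, |Y₁ l - Y₂ l| ≤ c)
    (i j : ZMod N) : |cycCC Y₁ i j - cycCC Y₂ i j| ≤ (N : ℝ) * c := by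
  have hN : (j - i).val + 1 ≤ N := ZMod.val_lt _
  have hc0 : 0 ≤ c := le_trans (abs_nonneg _) (hc 0)
  rw [cycCC, cycCC, ← Finset.sum_sub_distrib]
  calc |∑ ℓ ∈ Finset.range ((j - i).val + 1), (Y₁ (i + ℓ) - Y₂ (i + ℓ))|
      ≤ ∑ ℓ ∈ Finset.range ((j - i).val + 1), |Y₁ (i + ℓ) - Y₂ (i + ℓ)| :=
        Finset.abs_sum_le_sum_abs _ _
    _ ≤ ∑ _ℓ ∈ Finset.range ((j - i).val + 1), c := Finset.sum_le_sum (fun ℓ _ => hc _)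
    _ = ((j - i).val + 1 : ℕ) * c := by rw [Finset.sum_const, Finset.card_range, nsmul_eq_mul]
    _ ≤ (N : ℝ) * c := by
        apply mul_le_mul_of_nonneg_right _ hc0
        exact_mod_cast hN

lemma abs_cycOC_sub (Y₁ Y₂ : ZMod N → ℝ) (c : ℝ) (hc : ∀ l, |Y₁ l - Y₂ l| ≤ c)
    (i j : ZMod N) : |cycOC Y₁ i j - cycOC Y₂ i j| ≤ (N : ℝ) * c := by
  have hN : (j - i).val ≤ N := (ZMod.val_lt _).le
  have hc0 : 0 ≤ c := le_trans (abs_nonneg _) (hc 0)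
  rw [cycOC, cycOC, ← Finset.sum_sub_distrib]
  calc |∑ ℓ ∈ Finset.range ((j - i).val), (Y₁ (i + 1 + ℓ) - Y₂ (i + 1 + ℓ))|
      ≤ ∑ ℓ ∈ Finset.range ((j - i).val), |Y₁ (i + 1 + ℓ) - Y₂ (i + 1 + ℓ)| :=
        Finset.abs_sum_le_sum_abs _ _
    _ ≤ ∑ _ℓ ∈ Finset.range ((j - i).val), c := Finset.sum_le_sum (fun ℓ _ => hc _)
    _ = ((j - i).val : ℕ) * c := by rw [Finset.sum_const, Finset.card_range, nsmul_eq_mul]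
    _ ≤ (N : ℝ) * c := by
        apply mul_le_mul_of_nonneg_right _ hc0
        exact_mod_cast hN

lemma abs_sup'_sub {α : Type*} [Fintype α] [Nonempty α] (f g : α → ℝ) (c : ℝ)
    (h : ∀ j, |f j - g j| ≤ c) :
    |Finset.univ.sup' Finset.univ_nonempty f - Finset.univ.sup' Finset.univ_nonempty g| ≤ c := by
  rw [abs_le]
  constructor
  · have := my_sup'_le_sup'_add g f c (fun j => by have := (abs_le.1 (h j)).1; linarith)
    linarith
  · have := my_sup'_le_sup'_add f g c (fun j => by have := (abs_le.1 (h j)).2; linarith)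
    linarith

lemma key2 (Y : ZMod N → ℝ) (m : ZMod N) : Gz Y m = Y m - Mz Y (m - 1) := by
  by_cases hS : (∑ l : ZMod N, Y l) ≠ 0
  · exact key1 Y hS m
  push_neg at hS
  have main : ∀ ε : ℝ, 0 < ε →
      |Gz Y m - (Y m - Mz Y (m - 1))| ≤ (5 * N) * ε := by
    intro ε hε
    set Yε : ZMod N → ℝ := fun l => Y l + (if l = 0 then ε else 0) with hYε
    have hSε : (∑ l : ZMod N, Yε l) ≠ 0 := by
      rw [hYε]
      dsimp only
      rw [Finset.sum_add_distrib, hS, Finset.sum_ite_eq' Finset.univ (0 : ZMod N) (fun _ => ε)]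
      simpa using ne_of_gt hε
    have hpt : ∀ l, |Yε l - Y l| ≤ ε := by
      intro l
      rw [hYε]
      dsimp only
      split_ifs <;> simp [abs_of_nonneg hε.le, hε.le]
    have hKey := key1 Yε hSε m
    have hM : ∀ i, |Mz Yε i - Mz Y i| ≤ (N : ℝ) * ε := by
      intro i
      exact abs_sup'_sub _ _ _ (fun j => abs_cycOC_sub Yε Y ε hpt i j)
    have hG : |Gz Yε m - Gz Y m| ≤ 3 * ((N : ℝ) * ε) := by
      apply abs_sup'_sub
      intro k
      have h1 := abs_cycCC_sub Yε Y ε hpt k m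
      have h2 := hM (k - 1)
      have h3 := hM (k - 2)
      have e1 := abs_le.1 h1
      have e2 := abs_le.1 h2
      have e3 := abs_le.1 h3
      obtain ⟨a1, b1⟩ := e1
      obtain ⟨a2, b2⟩ := e2
      obtain ⟨a3, b3⟩ := e3
      rw [abs_le]
      exact ⟨by linarith, by linarith⟩
    have hptm := abs_le.1 (hpt m)
    have hMm := abs_le.1 (hM (m - 1))
    have hGm := abs_le.1 hG
    have hNε : (0:ℝ) ≤ (N:ℝ) * ε := by positivity
    have hεN : ε ≤ (N:ℝ) * ε := by
      have hN1 : (1:ℝ) ≤ N := by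
        have : 1 ≤ N := Nat.one_le_iff_ne_zero.2 (NeZero.ne N)
        exact_mod_cast this
      nlinarith
    rw [abs_le]
    constructor
    · rw [hKey] at hGm
      obtain ⟨a1, b1⟩ := hptm; obtain ⟨a2, b2⟩ := hMm; obtain ⟨a3, b3⟩ := hGm
      nlinarith
    · rw [hKey] at hGm
      obtain ⟨a1, b1⟩ := hptm; obtain ⟨a2, b2⟩ := hMm; obtain ⟨a3, b3⟩ := hGm
      nlinarith
  exact sub_eq_zero.1 (zero_of_le_eps _ _ main)
end D2

section E
variable [NeZero N]

lemma Tz_eq (X₁ X₂ : ZMod N → ℝ) (i : ZMod N) :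
    Tz X₁ X₂ i = X₁ (i - 1) + Sz (Yv X₁ X₂) (i - 1) - Sz (Yv X₁ X₂) i := rfl

lemma Dz_eq (X₁ X₂ : ZMod N → ℝ) (i : ZMod N) :
    Dz X₁ X₂ i = X₂ (i + 1) + Mz (Yv X₁ X₂) i - Mz (Yv X₁ X₂) (i - 1) := rfl

lemma Sz_eq (Y : ZMod N → ℝ) (i : ZMod N) : Sz Y i = Y i + Mz Y i := by
  rw [Sz, Mz, ← my_sup'_const_add]
  exact Finset.sup'_congr _ rfl (fun j _ => cycCC_eq_add Y i j)

lemma sup'_neg_reindex (f : ZMod N → ℝ) :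
    Finset.univ.sup' Finset.univ_nonempty (fun j => f (-j)) =
      Finset.univ.sup' Finset.univ_nonempty f := by
  apply le_antisymm
  · exact Finset.sup'_le _ _ fun j _ => Finset.le_sup' f (Finset.mem_univ (-j))
  · apply Finset.sup'_le
    intro k _
    have : f k = (fun j => f (-j)) (-k) := by simp
    rw [this]
    exact Finset.le_sup' (fun j => f (-j)) (Finset.mem_univ (-k))

variable (X₁ X₂ : ZMod N → ℝ)

lemma DT_diff (m : ZMod N) :
    Dz X₁ X₂ m - Tz X₁ X₂ (m + 1) = Sz (Yv X₁ X₂) (m + 1) - Mz (Yv X₁ X₂) (m - 1) := by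
  have h1 := Dz_eq X₁ X₂ m
  have h2 := Tz_eq X₁ X₂ (m + 1)
  have h3 : m + 1 - 1 = m := by ring
  rw [h3] at h2
  have h4 := Sz_eq (Yv X₁ X₂) m
  have h5 : Yv X₁ X₂ m = X₂ (m + 1) - X₁ m := rfl
  rw [h5] at h4
  linarith

lemma Yhat_eq (ℓ : ZMod N) :
    Yv (fun i => Tz X₁ X₂ (-i)) (fun i => Dz X₁ X₂ (-i)) ℓ =
      Sz (Yv X₁ X₂) (-ℓ) - Mz (Yv X₁ X₂) (-ℓ - 2) := by
  have h1 : Yv (fun i => Tz X₁ X₂ (-i)) (fun i => Dz X₁ X₂ (-i)) ℓ =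
      Dz X₁ X₂ (-ℓ - 1) - Tz X₁ X₂ (-ℓ) := by
    rw [Yv]
    congr 2
    ring
  rw [h1]
  have h2 := DT_diff X₁ X₂ (-ℓ - 1)
  have h3 : -ℓ - 1 + 1 = -ℓ := by ring
  have h4 : -ℓ - 1 - 1 = -ℓ - 2 := by ring
  rw [h3, h4] at h2
  exact h2

lemma cycCC_Yhat (i j : ZMod N) :
    cycCC (Yv (fun i => Tz X₁ X₂ (-i)) (fun i => Dz X₁ X₂ (-i))) i j =
      cycCC (Yv X₁ X₂) (-j) (-i) + Mz (Yv X₁ X₂) (-i) + Mz (Yv X₁ X₂) (-i - 1)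
        - Mz (Yv X₁ X₂) (-j - 1) - Mz (Yv X₁ X₂) (-j - 2) := by
  set Y := Yv X₁ X₂ with hY
  set v := (j - i).val with hv
  have hvj : -i - (v : ZMod N) = -j := by
    rw [hv, ZMod.natCast_zmod_val]
    ring
  have hvv : (-i - -j).val = v := by
    rw [hv]
    congr 1
    ring
  have hterm : ∀ ℓ : ℕ, (Yv (fun i => Tz X₁ X₂ (-i)) (fun i => Dz X₁ X₂ (-i))) (i + ℓ) =
      Y (-i - ℓ) + (Mz Y (-i - ℓ) + Mz Y (-i - ℓ - 1))
        - (Mz Y (-i - (ℓ+1 : ℕ)) + Mz Y (-i - (ℓ+1 : ℕ) - 1)) := by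
    intro ℓ
    rw [Yhat_eq X₁ X₂ (i + ℓ)]
    have e1 : -(i + (ℓ : ZMod N)) = -i - ℓ := by ring
    rw [e1, Sz_eq]
    push_cast
    ring_nf
    rfl
  rw [cycCC, Finset.sum_congr rfl (fun ℓ _ => hterm ℓ)]
  have hsplit : ∑ ℓ ∈ Finset.range (v + 1),
      (Y (-i - ℓ) + (Mz Y (-i - ℓ) + Mz Y (-i - ℓ - 1))
        - (Mz Y (-i - (ℓ+1 : ℕ)) + Mz Y (-i - (ℓ+1 : ℕ) - 1))) =
      (∑ ℓ ∈ Finset.range (v + 1), Y (-i - ℓ)) +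
      ∑ ℓ ∈ Finset.range (v + 1),
        ((Mz Y (-i - ℓ) + Mz Y (-i - ℓ - 1)) - (Mz Y (-i - (ℓ+1:ℕ)) + Mz Y (-i - (ℓ+1:ℕ) - 1))) := by
    rw [← Finset.sum_add_distrib]
    apply Finset.sum_congr rfl
    intros; ring
  rw [hsplit]
  have htel : ∑ ℓ ∈ Finset.range (v + 1),
      ((Mz Y (-i - ℓ) + Mz Y (-i - ℓ - 1)) - (Mz Y (-i - (ℓ+1:ℕ)) + Mz Y (-i - (ℓ+1:ℕ) - 1))) =
      (Mz Y (-i - (0:ℕ)) + Mz Y (-i - (0:ℕ) - 1))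
        - (Mz Y (-i - (v+1:ℕ)) + Mz Y (-i - (v+1:ℕ) - 1)) :=
    Finset.sum_range_sub' (fun ℓ => Mz Y (-i - (ℓ:ℕ)) + Mz Y (-i - (ℓ:ℕ) - 1)) (v + 1)
  rw [htel]
  have hrefl : ∑ ℓ ∈ Finset.range (v + 1), Y (-i - ℓ) = cycCC Y (-j) (-i) := by
    rw [cycCC, hvv]
    rw [← Finset.sum_range_reflect (fun ℓ => Y (-j + ℓ)) (v + 1)]
    apply Finset.sum_congr rfl
    intro ℓ hℓ
    rw [Finset.mem_range] at hℓ
    have hle : ℓ ≤ v := by omega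
    have : ((v + 1 - 1 - ℓ : ℕ) : ZMod N) = (v : ZMod N) - ℓ := by
      have : v + 1 - 1 - ℓ = v - ℓ := by omega
      rw [this, Nat.cast_sub hle]
    rw [this]
    congr 1
    rw [← hvj]
    ring
  rw [hrefl]
  have e0 : -i - ((0:ℕ):ZMod N) = -i := by push_cast; ring
  have ev : -i - ((v+1:ℕ):ZMod N) = -j - 1 := by push_cast; rw [← hvj]; ring_nf
  have ev2 : -j - 1 - 1 = (-j - 2 : ZMod N) := by ring
  rw [e0, ev, ev2]
  ring

lemma Sz_Yhat (i : ZMod N) :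
    Sz (Yv (fun i => Tz X₁ X₂ (-i)) (fun i => Dz X₁ X₂ (-i))) i = Sz (Yv X₁ X₂) (-i) := by
  set Y := Yv X₁ X₂ with hY
  have h1 : Sz (Yv (fun i => Tz X₁ X₂ (-i)) (fun i => Dz X₁ X₂ (-i))) i =
      (Mz Y (-i) + Mz Y (-i - 1)) + Finset.univ.sup' Finset.univ_nonempty
        (fun j => cycCC Y (-j) (-i) - Mz Y (-j - 1) - Mz Y (-j - 2)) := by
    rw [Sz, ← my_sup'_const_add]
    apply Finset.sup'_congr _ rfl
    intro j _
    rw [cycCC_Yhat X₁ X₂ i j]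
    ring
  have h2 : Finset.univ.sup' Finset.univ_nonempty
      (fun j => cycCC Y (-j) (-i) - Mz Y (-j - 1) - Mz Y (-j - 2)) = Gz Y (-i) := by
    rw [Gz, ← sup'_neg_reindex (fun k => cycCC Y k (-i) - Mz Y (k - 1) - Mz Y (k - 2))]
  rw [h1, h2, key2, Sz_eq]
  ring

lemma Mz_Yhat (i : ZMod N) :
    Mz (Yv (fun i => Tz X₁ X₂ (-i)) (fun i => Dz X₁ X₂ (-i))) i = Mz (Yv X₁ X₂) (-i - 2) := by
  have h1 := Sz_eq (Yv (fun i => Tz X₁ X₂ (-i)) (fun i => Dz X₁ X₂ (-i))) i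
  have h2 := Sz_Yhat X₁ X₂ i
  have h3 := Yhat_eq X₁ X₂ i
  linarith

theorem Tz_invol (i : ZMod N) :
    Tz (fun k => Tz X₁ X₂ (-k)) (fun k => Dz X₁ X₂ (-k)) i = X₁ (-i) := by
  rw [Tz_eq, Sz_Yhat, Sz_Yhat]
  have h1 : -(i - 1) = -i + 1 := by ring
  have h2 := Tz_eq X₁ X₂ (-i + 1)
  have h3 : -i + 1 - 1 = -i := by ring
  rw [h3] at h2
  rw [h1, h2]
  ring

theorem Dz_invol (i : ZMod N) :
    Dz (fun k => Tz X₁ X₂ (-k)) (fun k => Dz X₁ X₂ (-k)) i = X₂ (-i) := by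
  rw [Dz_eq, Mz_Yhat, Mz_Yhat]
  have h2 := Dz_eq X₁ X₂ (-i - 1)
  have h3 : -i - 1 + 1 = -i := by ring
  have h4 : -i - 1 - 1 = -i - 2 := by ring
  rw [h3, h4] at h2
  have h5 : -(i - 1) - 2 = -i - 1 := by ring
  rw [h5]
  have h6 : -(i + 1) = -i - 1 := by ring
  rw [h6, h2]
  ring
end E

section F
variable [NeZero N] (X₁ X₂ : ZMod N → ℝ)

lemma sum_Tz : ∑ i : ZMod N, Tz X₁ X₂ i = ∑ i : ZMod N, X₁ i := by
  have h : ∀ f : ZMod N → ℝ, ∑ i : ZMod N, f (i - 1) = ∑ i : ZMod N, f i :=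
    fun f => Fintype.sum_equiv (Equiv.subRight (1 : ZMod N)) _ _ (fun k => rfl)
  calc ∑ i : ZMod N, Tz X₁ X₂ i
      = ∑ i : ZMod N, (X₁ (i - 1) + Sz (Yv X₁ X₂) (i - 1) - Sz (Yv X₁ X₂) i) :=
        Finset.sum_congr rfl (fun i _ => Tz_eq X₁ X₂ i)
    _ = (∑ i : ZMod N, X₁ (i - 1)) + (∑ i : ZMod N, Sz (Yv X₁ X₂) (i - 1))
        - ∑ i : ZMod N, Sz (Yv X₁ X₂) i := by
        rw [Finset.sum_sub_distrib, Finset.sum_add_distrib]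
    _ = ∑ i : ZMod N, X₁ i := by rw [h X₁, h (Sz (Yv X₁ X₂))]; ring
lemma Tz_add_Dz (i : ZMod N) : Tz X₁ X₂ i + Dz X₁ X₂ i = X₁ i + X₂ i := by
  have h1 := Tz_eq X₁ X₂ i
  have h2 := Dz_eq X₁ X₂ i
  have h3 := Sz_eq (Yv X₁ X₂) (i - 1)
  have h4 := Sz_eq (Yv X₁ X₂) i
  have h5 : Yv X₁ X₂ (i - 1) = X₂ i - X₁ (i - 1) := by
    rw [Yv]; congr 2; ring
  have h6 : Yv X₁ X₂ i = X₂ (i + 1) - X₁ i := rfl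
  linarith

lemma sum_Dz : ∑ i : ZMod N, Dz X₁ X₂ i = ∑ i : ZMod N, X₂ i := by
  have h1 := sum_Tz X₁ X₂
  have h2 : ∑ i : ZMod N, (Tz X₁ X₂ i + Dz X₁ X₂ i) = ∑ i : ZMod N, (X₁ i + X₂ i) :=
    Finset.sum_congr rfl (fun i _ => Tz_add_Dz X₁ X₂ i)
  rw [Finset.sum_add_distrib, Finset.sum_add_distrib] at h2
  linarith

lemma Tz_nonneg (hX1 : ∀ i, 0 ≤ X₁ i) (hX2 : ∀ i, 0 ≤ X₂ i) (i : ZMod N) :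
    0 ≤ Tz X₁ X₂ i := by
  set Y := Yv X₁ X₂ with hY
  rw [Tz_eq]
  obtain ⟨j₀, _, hj₀⟩ := Finset.exists_mem_eq_sup' (Finset.univ_nonempty (α := ZMod N))
    (fun j => cycCC Y i j)
  have hSzi : Sz Y i = cycCC Y i j₀ := hj₀
  by_cases hj : j₀ = i - 1
  · have h1 : Sz Y i = ∑ l : ZMod N, Y l := by rw [hSzi, hj, cycCC_full]
    have h2 : cycCC Y (i - 1) (i - 1 - 1) = ∑ l : ZMod N, Y l := cycCC_full Y (i - 1)
    have h3 : cycCC Y (i - 1) (i - 1 - 1) ≤ Sz Y (i - 1) :=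
      Finset.le_sup' (fun j => cycCC Y (i - 1) j) (Finset.mem_univ _)
    have := hX1 (i - 1)
    linarith
  · have h1 : cycCC Y (i - 1) j₀ ≤ Sz Y (i - 1) :=
      Finset.le_sup' (fun j => cycCC Y (i - 1) j) (Finset.mem_univ _)
    have h2 : cycCC Y (i - 1) j₀ = Y (i - 1) + cycCC Y i j₀ := by
      rw [cycCC_eq_add, cycOC_pred Y hj]
    have h3 : Y (i - 1) = X₂ i - X₁ (i - 1) := by
      rw [hY, Yv]; congr 2; ring
    have := hX2 i
    linarith

lemma Dz_nonneg (hX1 : ∀ i, 0 ≤ X₁ i) (hX2 : ∀ i, 0 ≤ X₂ i) (i : ZMod N) :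
    0 ≤ Dz X₁ X₂ i := by
  set Y := Yv X₁ X₂ with hY
  rw [Dz_eq]
  obtain ⟨j₀, _, hj₀⟩ := Finset.exists_mem_eq_sup' (Finset.univ_nonempty (α := ZMod N))
    (fun j => cycOC Y (i - 1) j)
  have hMzi : Mz Y (i - 1) = cycOC Y (i - 1) j₀ := hj₀
  have hMz0 : 0 ≤ Mz Y i := by
    have : cycOC Y i i ≤ Mz Y i := Finset.le_sup' (fun j => cycOC Y i j) (Finset.mem_univ _)
    rw [cycOC_self] at this
    exact this
  by_cases hj : j₀ = i - 1
  · have h1 : Mz Y (i - 1) = 0 := by rw [hMzi, hj, cycOC_self]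
    have := hX2 (i + 1)
    linarith
  · have h1 : cycOC Y (i - 1) j₀ = cycCC Y i j₀ := cycOC_pred Y hj
    have h2 : cycCC Y i j₀ = Y i + cycOC Y i j₀ := cycCC_eq_add Y i j₀
    have h3 : cycOC Y i j₀ ≤ Mz Y i := Finset.le_sup' (fun j => cycOC Y i j) (Finset.mem_univ _)
    have h4 : Y i = X₂ (i + 1) - X₁ i := rfl
    have := hX1 i
    linarith

lemma exists_int_cycCC (a b : ZMod N → ℕ) (i j : ZMod N) :
    ∃ z : ℤ, cycCC (Yv (fun l => (a l : ℝ)) (fun l => (b l : ℝ))) i j = z := by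
  refine ⟨∑ ℓ ∈ Finset.range ((j - i).val + 1),
    ((b (i + ℓ + 1) : ℤ) - (a (i + ℓ) : ℤ)), ?_⟩
  rw [cycCC]
  push_cast
  rfl

lemma exists_int_cycOC (a b : ZMod N → ℕ) (i j : ZMod N) :
    ∃ z : ℤ, cycOC (Yv (fun l => (a l : ℝ)) (fun l => (b l : ℝ))) i j = z := by
  refine ⟨∑ ℓ ∈ Finset.range ((j - i).val),
    ((b (i + 1 + ℓ + 1) : ℤ) - (a (i + 1 + ℓ) : ℤ)), ?_⟩
  rw [cycOC]
  push_cast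
  rfl

lemma exists_nat_Tz (a b : ZMod N → ℕ) (i : ZMod N) :
    ∃ n : ℕ, Tz (fun l => (a l : ℝ)) (fun l => (b l : ℝ)) i = n := by
  set A : ZMod N → ℝ := fun l => (a l : ℝ)
  set B : ZMod N → ℝ := fun l => (b l : ℝ)
  have hnn : 0 ≤ Tz A B i := Tz_nonneg A B (fun l => Nat.cast_nonneg _)
    (fun l => Nat.cast_nonneg _) i
  obtain ⟨j₁, _, hj₁⟩ := Finset.exists_mem_eq_sup' (Finset.univ_nonempty (α := ZMod N))
    (fun j => cycCC (Yv A B) (i - 1) j)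
  obtain ⟨j₂, _, hj₂⟩ := Finset.exists_mem_eq_sup' (Finset.univ_nonempty (α := ZMod N))
    (fun j => cycCC (Yv A B) i j)
  obtain ⟨z₁, hz₁⟩ := exists_int_cycCC a b (i - 1) j₁
  obtain ⟨z₂, hz₂⟩ := exists_int_cycCC a b i j₂
  have hT : Tz A B i = ((a (i - 1) : ℤ) + z₁ - z₂ : ℤ) := by
    rw [Tz_eq, Sz, Sz, hj₁, hj₂, hz₁, hz₂]
    push_cast
    ring
  have hz : 0 ≤ ((a (i - 1) : ℤ) + z₁ - z₂) := by
    rw [hT] at hnn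
    exact_mod_cast hnn
  refine ⟨((a (i - 1) : ℤ) + z₁ - z₂).toNat, ?_⟩
  rw [hT]
  exact_mod_cast congrArg (Int.cast : ℤ → ℝ) (Int.toNat_of_nonneg hz).symm

lemma exists_nat_Dz (a b : ZMod N → ℕ) (i : ZMod N) :
    ∃ n : ℕ, Dz (fun l => (a l : ℝ)) (fun l => (b l : ℝ)) i = n := by
  set A : ZMod N → ℝ := fun l => (a l : ℝ)
  set B : ZMod N → ℝ := fun l => (b l : ℝ)
  have hnn : 0 ≤ Dz A B i := Dz_nonneg A B (fun l => Nat.cast_nonneg _)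
    (fun l => Nat.cast_nonneg _) i
  obtain ⟨j₁, _, hj₁⟩ := Finset.exists_mem_eq_sup' (Finset.univ_nonempty (α := ZMod N))
    (fun j => cycOC (Yv A B) i j)
  obtain ⟨j₂, _, hj₂⟩ := Finset.exists_mem_eq_sup' (Finset.univ_nonempty (α := ZMod N))
    (fun j => cycOC (Yv A B) (i - 1) j)
  obtain ⟨z₁, hz₁⟩ := exists_int_cycOC a b i j₁
  obtain ⟨z₂, hz₂⟩ := exists_int_cycOC a b (i - 1) j₂
  have hT : Dz A B i = ((b (i + 1) : ℤ) + z₁ - z₂ : ℤ) := by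
    rw [Dz_eq, Mz, Mz, hj₁, hj₂, hz₁, hz₂]
    push_cast
    ring
  have hz : 0 ≤ ((b (i + 1) : ℤ) + z₁ - z₂) := by
    rw [hT] at hnn
    exact_mod_cast hnn
  refine ⟨((b (i + 1) : ℤ) + z₁ - z₂).toNat, ?_⟩
  rw [hT]
  exact_mod_cast congrArg (Int.cast : ℤ → ℝ) (Int.toNat_of_nonneg hz).symm
end F

section G
variable [NeZero N]

/-- the integer-level Pitman map -/
noncomputable def Fnat (p : (ZMod N → ℕ) × (ZMod N → ℕ)) : (ZMod N → ℕ) × (ZMod N → ℕ) :=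
  (fun i => ⌊Tz (fun l => (p.1 l : ℝ)) (fun l => (p.2 l : ℝ)) i⌋₊,
   fun i => ⌊Dz (fun l => (p.1 l : ℝ)) (fun l => (p.2 l : ℝ)) i⌋₊)

lemma Fnat_cast₁ (p : (ZMod N → ℕ) × (ZMod N → ℕ)) (i : ZMod N) :
    (((Fnat p).1 i : ℕ) : ℝ) = Tz (fun l => (p.1 l : ℝ)) (fun l => (p.2 l : ℝ)) i := by
  obtain ⟨n, hn⟩ := exists_nat_Tz p.1 p.2 i
  rw [Fnat]
  simp only [hn, Nat.floor_natCast]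

lemma Fnat_cast₂ (p : (ZMod N → ℕ) × (ZMod N → ℕ)) (i : ZMod N) :
    (((Fnat p).2 i : ℕ) : ℝ) = Dz (fun l => (p.1 l : ℝ)) (fun l => (p.2 l : ℝ)) i := by
  obtain ⟨n, hn⟩ := exists_nat_Dz p.1 p.2 i
  rw [Fnat]
  simp only [hn, Nat.floor_natCast]

def revp (p : (ZMod N → ℕ) × (ZMod N → ℕ)) : (ZMod N → ℕ) × (ZMod N → ℕ) :=
  (fun i => p.1 (-i), fun i => p.2 (-i))

lemma revp_revp (p : (ZMod N → ℕ) × (ZMod N → ℕ)) : revp (revp p) = p := by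
  rw [revp, revp]
  simp

lemma Fnat_inv (p : (ZMod N → ℕ) × (ZMod N → ℕ)) : revp (Fnat (revp (Fnat p))) = p := by
  have hc1 : (fun l => (((revp (Fnat p)).1 l : ℕ) : ℝ)) =
      (fun k => Tz (fun l => (p.1 l : ℝ)) (fun l => (p.2 l : ℝ)) (-k)) := by
    funext k
    exact Fnat_cast₁ p (-k)
  have hc2 : (fun l => (((revp (Fnat p)).2 l : ℕ) : ℝ)) =
      (fun k => Dz (fun l => (p.1 l : ℝ)) (fun l => (p.2 l : ℝ)) (-k)) := by
    funext k
    exact Fnat_cast₂ p (-k)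
  have h1 : ∀ i : ZMod N, (Fnat (revp (Fnat p))).1 i = p.1 (-i) := by
    intro i
    have := Fnat_cast₁ (revp (Fnat p)) i
    rw [hc1, hc2, Tz_invol] at this
    exact_mod_cast this
  have h2 : ∀ i : ZMod N, (Fnat (revp (Fnat p))).2 i = p.2 (-i) := by
    intro i
    have := Fnat_cast₂ (revp (Fnat p)) i
    rw [hc1, hc2, Dz_invol] at this
    exact_mod_cast this
  refine Prod.ext ?_ ?_
  · funext i
    show (Fnat (revp (Fnat p))).1 (-i) = p.1 i
    rw [h1 (-i), neg_neg]
  · funext i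
    show (Fnat (revp (Fnat p))).2 (-i) = p.2 i
    rw [h2 (-i), neg_neg]

lemma Fnat_bij : ∀ y : (ZMod N → ℕ) × (ZMod N → ℕ), Fnat ⁻¹' {y} = {revp (Fnat (revp y))} := by
  intro y
  ext x
  simp only [Set.mem_preimage, Set.mem_singleton_iff]
  constructor
  · rintro rfl
    exact (Fnat_inv x).symm
  · rintro rfl
    have := Fnat_inv (revp y)
    have h := congrArg (revp (N := N)) this
    rwa [revp_revp, revp_revp] at h

lemma Fnat_sum₁ (p : (ZMod N → ℕ) × (ZMod N → ℕ)) :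
    ∑ i : ZMod N, (Fnat p).1 i = ∑ i : ZMod N, p.1 i := by
  have : ((∑ i : ZMod N, (Fnat p).1 i : ℕ) : ℝ) = ((∑ i : ZMod N, p.1 i : ℕ) : ℝ) := by
    push_cast
    rw [Finset.sum_congr rfl (fun i _ => Fnat_cast₁ p i), sum_Tz]
  exact_mod_cast this

lemma Fnat_sum₂ (p : (ZMod N → ℕ) × (ZMod N → ℕ)) :
    ∑ i : ZMod N, (Fnat p).2 i = ∑ i : ZMod N, p.2 i := by
  have : ((∑ i : ZMod N, (Fnat p).2 i : ℕ) : ℝ) = ((∑ i : ZMod N, p.2 i : ℕ) : ℝ) := by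
    push_cast
    rw [Finset.sum_congr rfl (fun i _ => Fnat_cast₂ p i), sum_Dz]
  exact_mod_cast this

lemma Fnat_add (p : (ZMod N → ℕ) × (ZMod N → ℕ)) (i : ZMod N) :
    (Fnat p).1 i + (Fnat p).2 i = p.1 i + p.2 i := by
  have : (((Fnat p).1 i + (Fnat p).2 i : ℕ) : ℝ) = ((p.1 i + p.2 i : ℕ) : ℝ) := by
    push_cast
    rw [Fnat_cast₁ p i, Fnat_cast₂ p i, Tz_add_Dz]
  exact_mod_cast this
end G

section G2
variable [NeZero N]

lemma Fnat_right_inv (y : (ZMod N → ℕ) × (ZMod N → ℕ)) :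
    Fnat (revp (Fnat (revp y))) = y := by
  have := Fnat_inv (revp y)
  have h := congrArg (revp (N := N)) this
  rwa [revp_revp, revp_revp] at h

lemma prodAB (p₁ p₂ : ℝ) (q : ZMod N → ℝ) (a b : ZMod N → ℕ) :
    (∏ i : ZMod N, (p₁ * q i) ^ (a i) * (1 - p₁ * q i)) *
      (∏ i : ZMod N, (p₂ * q i) ^ (b i) * (1 - p₂ * q i)) =
    ((∏ i : ZMod N, (1 - p₁ * q i) * (1 - p₂ * q i)) *
      p₁ ^ (∑ i : ZMod N, a i) * p₂ ^ (∑ i : ZMod N, b i)) *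
      ∏ i : ZMod N, q i ^ (a i + b i) := by
  rw [← Finset.prod_mul_distrib]
  have h1 : ∀ i ∈ (Finset.univ : Finset (ZMod N)),
      (p₁ * q i) ^ (a i) * (1 - p₁ * q i) * ((p₂ * q i) ^ (b i) * (1 - p₂ * q i)) =
      ((1 - p₁ * q i) * (1 - p₂ * q i)) * (p₁ ^ (a i) * p₂ ^ (b i) * q i ^ (a i + b i)) := by
    intro i _
    rw [mul_pow, mul_pow, pow_add]
    ring
  rw [Finset.prod_congr rfl h1, Finset.prod_mul_distrib, Finset.prod_mul_distrib,
    Finset.prod_mul_distrib, Finset.prod_mul_distrib,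
    Finset.prod_pow_eq_pow_sum, Finset.prod_pow_eq_pow_sum]
  ring

lemma prod_invariant (p₁ p₂ : ℝ) (q : ZMod N → ℝ) (x : (ZMod N → ℕ) × (ZMod N → ℕ)) :
    (∏ i : ZMod N, (p₁ * q i) ^ ((Fnat x).1 i) * (1 - p₁ * q i)) *
      (∏ i : ZMod N, (p₂ * q i) ^ ((Fnat x).2 i) * (1 - p₂ * q i)) =
    (∏ i : ZMod N, (p₁ * q i) ^ (x.1 i) * (1 - p₁ * q i)) *
      (∏ i : ZMod N, (p₂ * q i) ^ (x.2 i) * (1 - p₂ * q i)) := by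
  rw [prodAB, prodAB, Fnat_sum₁, Fnat_sum₂]
  congr 1
  apply Finset.prod_congr rfl
  intro i _
  rw [Fnat_add]
end G2

open MeasureTheory ProbabilityTheory


open MeasureTheory ProbabilityTheory

/-- Geometric Burke property: for independent geometric random variables
`X₁(i) ~ Geom(p₁qᵢ)`, `X₂(i) ~ Geom(p₂qᵢ)`, the pair `(X₁, X₂)` has the same joint law
as its zero-temperature periodic Pitman transform `(T̃(X₁,X₂), D̃(X₁,X₂))`. -/
theorem geometric_burke_property [NeZero N] {Ω : Type*} [MeasurableSpace Ω]
    (μ : Measure Ω) [IsProbabilityMeasure μ]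
    (p₁ p₂ : ℝ) (q : ZMod N → ℝ)
    (hq : ∀ i, 0 < q i ∧ q i ≤ 1)
    (h1 : ∀ i, 0 < p₁ * q i ∧ p₁ * q i < 1)
    (h2 : ∀ i, 0 < p₂ * q i ∧ p₂ * q i < 1)
    (X₁ X₂ : ZMod N → Ω → ℕ)
    (hm1 : ∀ i, Measurable (X₁ i)) (hm2 : ∀ i, Measurable (X₂ i))
    (hindep : iIndepFun (Sum.elim X₁ X₂) μ)
    (hgeom1 : ∀ i n, μ {ω | X₁ i ω = n} =
      ENNReal.ofReal ((p₁ * q i) ^ n * (1 - p₁ * q i)))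
    (hgeom2 : ∀ i n, μ {ω | X₂ i ω = n} =
      ENNReal.ofReal ((p₂ * q i) ^ n * (1 - p₂ * q i))) :
    μ.map (fun ω => ((fun i => (X₁ i ω : ℝ)), (fun i => (X₂ i ω : ℝ)))) =
      μ.map (fun ω =>
        (Tz (fun i => (X₁ i ω : ℝ)) (fun i => (X₂ i ω : ℝ)),
         Dz (fun i => (X₁ i ω : ℝ)) (fun i => (X₂ i ω : ℝ)))) := by
  classical
  set S : Ω → (ZMod N → ℕ) × (ZMod N → ℕ) :=
    fun ω => (fun i => X₁ i ω, fun i => X₂ i ω) with hSdef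
  have hmS : Measurable S :=
    Measurable.prod (measurable_pi_lambda _ hm1) (measurable_pi_lambda _ hm2)
  set ι : (ZMod N → ℕ) × (ZMod N → ℕ) → (ZMod N → ℝ) × (ZMod N → ℝ) :=
    fun p => (fun i => (p.1 i : ℝ), fun i => (p.2 i : ℝ)) with hιdef
  have hmι : Measurable ι := measurable_of_countable _
  have hmF : Measurable (Fnat (N := N)) := measurable_of_countable _
  have e1 : (fun ω => ((fun i => (X₁ i ω : ℝ)), (fun i => (X₂ i ω : ℝ)))) = ι ∘ S := rfl
  have e2 : (fun ω =>
        (Tz (fun i => (X₁ i ω : ℝ)) (fun i => (X₂ i ω : ℝ)),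
         Dz (fun i => (X₁ i ω : ℝ)) (fun i => (X₂ i ω : ℝ)))) = (ι ∘ Fnat) ∘ S := by
    funext ω
    refine Prod.ext ?_ ?_
    · show Tz (fun i => (X₁ i ω : ℝ)) (fun i => (X₂ i ω : ℝ)) = fun i => (((Fnat (S ω)).1 i : ℕ) : ℝ)
      funext i
      exact (Fnat_cast₁ (S ω) i).symm
    · show Dz (fun i => (X₁ i ω : ℝ)) (fun i => (X₂ i ω : ℝ)) = fun i => (((Fnat (S ω)).2 i : ℕ) : ℝ)
      funext i
      exact (Fnat_cast₂ (S ω) i).symm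
  -- singleton masses of the law of S
  have hnn1 : ∀ (a : ZMod N → ℕ) (i : ZMod N), 0 ≤ (p₁ * q i) ^ (a i) * (1 - p₁ * q i) :=
    fun a i => mul_nonneg (pow_nonneg (h1 i).1.le _) (by linarith [(h1 i).2])
  have hnn2 : ∀ (b : ZMod N → ℕ) (i : ZMod N), 0 ≤ (p₂ * q i) ^ (b i) * (1 - p₂ * q i) :=
    fun b i => mul_nonneg (pow_nonneg (h2 i).1.le _) (by linarith [(h2 i).2])
  have hsingle : ∀ p : (ZMod N → ℕ) × (ZMod N → ℕ),
      (μ.map S) {p} = ENNReal.ofReal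
        ((∏ i : ZMod N, (p₁ * q i) ^ (p.1 i) * (1 - p₁ * q i)) *
         (∏ i : ZMod N, (p₂ * q i) ^ (p.2 i) * (1 - p₂ * q i))) := by
    intro p
    rw [Measure.map_apply hmS (measurableSet_singleton p)]
    have hpre : S ⁻¹' {p} = ⋂ k ∈ (Finset.univ : Finset (ZMod N ⊕ ZMod N)),
        (Sum.elim X₁ X₂ k) ⁻¹' {Sum.elim p.1 p.2 k} := by
      ext ω
      simp only [Set.mem_preimage, Set.mem_singleton_iff, Set.mem_iInter, Finset.mem_univ,
        forall_const]
      constructor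
      · intro h k
        have h1' : ∀ i, X₁ i ω = p.1 i := fun i => congrFun (congrArg Prod.fst h) i
        have h2' : ∀ i, X₂ i ω = p.2 i := fun i => congrFun (congrArg Prod.snd h) i
        cases k with
        | inl i => exact h1' i
        | inr i => exact h2' i
      · intro h
        refine Prod.ext ?_ ?_
        · funext i
          exact h (Sum.inl i)
        · funext i
          exact h (Sum.inr i)
    rw [hpre]
    rw [(iIndepFun_iff _ _ _).mp hindep Finset.univ
      (f' := fun k => (Sum.elim X₁ X₂ k) ⁻¹' {Sum.elim p.1 p.2 k})
      (fun k _ => ⟨{Sum.elim p.1 p.2 k}, measurableSet_singleton _, rfl⟩)]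
    rw [Fintype.prod_sum_type]
    simp only [Sum.elim_inl, Sum.elim_inr]
    have hg1 : ∀ i : ZMod N, μ ((X₁ i) ⁻¹' {p.1 i}) =
        ENNReal.ofReal ((p₁ * q i) ^ (p.1 i) * (1 - p₁ * q i)) := fun i => hgeom1 i (p.1 i)
    have hg2 : ∀ i : ZMod N, μ ((X₂ i) ⁻¹' {p.2 i}) =
        ENNReal.ofReal ((p₂ * q i) ^ (p.2 i) * (1 - p₂ * q i)) := fun i => hgeom2 i (p.2 i)
    rw [Finset.prod_congr rfl (fun i _ => hg1 i), Finset.prod_congr rfl (fun i _ => hg2 i),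
      ← ENNReal.ofReal_prod_of_nonneg (fun i _ => hnn1 p.1 i),
      ← ENNReal.ofReal_prod_of_nonneg (fun i _ => hnn2 p.2 i),
      ← ENNReal.ofReal_mul (Finset.prod_nonneg (fun i _ => hnn1 p.1 i))]
  -- invariance of the law under Fnat
  have hkey : (μ.map S).map Fnat = μ.map S := by
    rw [Measure.ext_iff_singleton]
    intro y
    rw [Measure.map_apply hmF (measurableSet_singleton y), Fnat_bij y, hsingle, hsingle]
    congr 1
    have hFG := Fnat_right_inv y
    calc (∏ i : ZMod N, (p₁ * q i) ^ ((revp (Fnat (revp y))).1 i) * (1 - p₁ * q i)) *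
          (∏ i : ZMod N, (p₂ * q i) ^ ((revp (Fnat (revp y))).2 i) * (1 - p₂ * q i))
        = (∏ i : ZMod N, (p₁ * q i) ^ ((Fnat (revp (Fnat (revp y)))).1 i) * (1 - p₁ * q i)) *
          (∏ i : ZMod N, (p₂ * q i) ^ ((Fnat (revp (Fnat (revp y)))).2 i) * (1 - p₂ * q i)) :=
          (prod_invariant p₁ p₂ q _).symm
      _ = _ := by rw [hFG]
  rw [e1, e2, ← Measure.map_map hmι hmS, ← Measure.map_map (hmι.comp hmF) hmS,
    ← Measure.map_map hmι hmF, hkey]
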